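/- Let d be a dissimilarity on [0,1) that is continuous (with respect to the metric Arc) and strict circular Robinson. Let Dih_∞ be the subgroup of the group of bijections of [0,1) generated by the cyclic shifts π_u(x) = (x+u) mod 1 for u ∈ [0,1) together with the reversal πᵣ(x) = (−x) mod 1. For distinct t, s ∈ [0,1), let I(t,s) = {x ∈ [0,1) : (t,x,s) ∈ 𝒞} and let σ_{t,s} be the bijection of [0,1) defined by σ_{t,s}(x) = (t + s − x) mod 1 for x ∈ I(t,s) and σ_{t,s}(x) = x otherwise, and let G be the subgroup generated by all σ_{t,s}. If π = g ∘ h with g ∈ Dih_∞ and h ∈ G, and the dissimilarity (x,y) ↦ d(π(x), π(y)) is strict circular Robinson, then π ∈ Dih_∞. -/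

import Mathlib

open Set

/-- The circle, modeled as the half-open interval `[0,1)`. -/
abbrev Circ : Type := ↥(Set.Ico (0:ℝ) 1)

/-- Arc-length metric on the circle `[0,1)`. -/
noncomputable def ArcDist (s t : ℝ) : ℝ := min |s - t| (1 - |s - t|)

/-- The natural cyclic order on `[0,1)`. -/
def CycR (x y z : ℝ) : Prop := (x < y ∧ y < z) ∨ (y < z ∧ z < x) ∨ (z < x ∧ x < y)

/-- The fractional part, as an element of the circle `[0,1)`. -/
noncomputable def fractC (x : ℝ) : Circ :=
  ⟨Int.fract x, Int.fract_nonneg x, Int.fract_lt_one x⟩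

/-- The cyclic shift `x ↦ (x + u) mod 1` on the circle. -/
noncomputable def shiftFun (u : ℝ) : Circ → Circ := fun x => fractC (x.1 + u)

/-- The reversal `x ↦ (-x) mod 1` on the circle. -/
noncomputable def revFun : Circ → Circ := fun x => fractC (-x.1)

open Classical in
/-- The map reversing the open arc `I(t,s) = {x | (t,x,s) ∈ 𝒞}` of the circle,
`x ↦ (t + s - x) mod 1` on `I(t,s)`, and the identity elsewhere. -/
noncomputable def arcRevFun (t s : Circ) : Circ → Circ := fun x =>
  if CycR t.1 x.1 s.1 then fractC (t.1 + s.1 - x.1) else x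

/-- The infinite dihedral group: the subgroup of bijections of the circle generated
by all the cyclic shifts together with the reversal. -/
noncomputable def DihInf : Subgroup (Equiv.Perm Circ) :=
  Subgroup.closure
    ({π : Equiv.Perm Circ | ∃ u ∈ Set.Ico (0:ℝ) 1, ⇑π = shiftFun u} ∪
     {π : Equiv.Perm Circ | ⇑π = revFun})

/-- The subgroup of bijections of the circle generated by all arc reversals. -/
noncomputable def GInf : Subgroup (Equiv.Perm Circ) :=
  Subgroup.closure {π : Equiv.Perm Circ | ∃ t s : Circ, t ≠ s ∧ ⇑π = arcRevFun t s}

/-- `d` is a dissimilarity on the circle. -/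
def DissimC (d : Circ → Circ → ℝ) : Prop :=
  (∀ x y, 0 ≤ d x y ∧ d x y = d y x) ∧ (∀ x, d x x = 0)

/-- `d` is (jointly) continuous with respect to the metric `ArcDist`. -/
def ContinuousArcC (d : Circ → Circ → ℝ) : Prop :=
  ∀ x y : Circ, ∀ ε : ℝ, 0 < ε → ∃ δ : ℝ, 0 < δ ∧
    ∀ x' y' : Circ, ArcDist x.1 x'.1 < δ → ArcDist y.1 y'.1 < δ →
      |d x' y' - d x y| < ε

/-- `d` is strict circular Robinson on the circle. -/
def StrictCircRobinsonC (d : Circ → Circ → ℝ) : Prop :=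
  ∀ w x y z : Circ,
    w ≠ x → w ≠ y → w ≠ z → x ≠ y → x ≠ z → y ≠ z →
    CycR w.1 x.1 y.1 → CycR w.1 y.1 z.1 → min (d y x) (d y z) < d y w

namespace Aux17


lemma fractC_val (x : ℝ) : (fractC x).1 = Int.fract x := rfl

lemma fractC_self (x : Circ) : fractC x.1 = x :=
  Subtype.ext (Int.fract_eq_self.2 ⟨x.2.1, x.2.2⟩)

lemma fractC_add_int (x : ℝ) (k : ℤ) : fractC (x + k) = fractC x :=
  Subtype.ext (Int.fract_add_intCast x k)

lemma fractC_eq_iff {a b : ℝ} : fractC a = fractC b ↔ ∃ k : ℤ, a - b = k := by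
  rw [Subtype.ext_iff]
  exact Int.fract_eq_fract

lemma fractC_eq_of_sub_int {a b : ℝ} (k : ℤ) (h : a - b = k) : fractC a = fractC b :=
  fractC_eq_iff.2 ⟨k, h⟩

lemma fractC_ne {a b : ℝ} (h1 : a < b) (h2 : b < a + 1) : fractC a ≠ fractC b := by
  intro h
  rcases fractC_eq_iff.1 h with ⟨k, hk⟩
  have h3 : (-1 : ℝ) < (k : ℝ) := by rw [← hk]; linarith
  have h4 : (k : ℝ) < 0 := by rw [← hk]; linarith
  have h5 : (-1 : ℤ) < k := by exact_mod_cast h3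
  have h6 : k < 0 := by exact_mod_cast h4
  omega

/-- distance to the nearest integer -/
noncomputable def nz (x : ℝ) : ℝ := |x - round x|

lemma nz_nonneg (x : ℝ) : 0 ≤ nz x := abs_nonneg _

lemma nz_le (x : ℝ) (k : ℤ) : nz x ≤ |x - k| := round_le x k

lemma nz_le_abs (x : ℝ) : nz x ≤ |x| := by unfold nz; simpa using round_le x 0

lemma nz_le_half (x : ℝ) : nz x ≤ 1/2 := abs_sub_round x

lemma nz_add_int (x : ℝ) (k : ℤ) : nz (x + k) = nz x := by
  unfold nz
  rw [round_add_intCast]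
  push_cast
  ring_nf

lemma nz_neg (x : ℝ) : nz (-x) = nz x := by
  apply le_antisymm
  · calc nz (-x) ≤ |(-x) - (-(round x) : ℤ)| := nz_le _ _
      _ = nz x := by push_cast; rw [show -x - -(round x : ℝ) = -(x - round x) by ring, abs_neg]; rfl
  · calc nz x ≤ |x - (-(round (-x)) : ℤ)| := nz_le _ _
      _ = nz (-x) := by push_cast; rw [show x - -(round (-x) : ℝ) = -(-x - round (-x)) by ring, abs_neg]; rfl

lemma nz_add_le (x y : ℝ) : nz (x + y) ≤ nz x + nz y := by
  calc nz (x + y) ≤ |x + y - (round x + round y : ℤ)| := nz_le _ _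
    _ ≤ nz x + nz y := by
        push_cast
        rw [show x + y - ((round x : ℝ) + round y) = (x - round x) + (y - round y) by ring]
        exact abs_add_le _ _

lemma nz_eq_abs {x : ℝ} (h : |x| ≤ 1/2) : nz x = |x| := by
  have h1 := abs_le.1 h
  by_cases hx : x = 1/2
  · subst hx
    unfold nz
    rw [round_eq]
    norm_num
  · have hr : round x = 0 := round_eq_zero_iff.2 ⟨by linarith, lt_of_le_of_ne h1.2 hx⟩
    unfold nz; rw [hr]; norm_num

lemma nz_eq_zero_iff {x : ℝ} : nz x = 0 ↔ ∃ k : ℤ, x = k := by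
  constructor
  · intro h
    exact ⟨round x, by have := abs_eq_zero.1 h; linarith⟩
  · rintro ⟨k, rfl⟩
    unfold nz; rw [round_intCast]; simp

lemma nz_pos {x : ℝ} (h : ∀ k : ℤ, x ≠ k) : 0 < nz x := by
  rcases lt_or_eq_of_le (nz_nonneg x) with h' | h'
  · exact h'
  · exfalso; rcases nz_eq_zero_iff.1 h'.symm with ⟨k, hk⟩; exact h k hk

lemma arc_fract (a b : ℝ) : ArcDist (Int.fract a) (Int.fract b) = nz (a - b) := by
  have key : nz (a - b) = nz (Int.fract a - Int.fract b) := by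
    have : a - b = (Int.fract a - Int.fract b) + ((⌊a⌋ - ⌊b⌋ : ℤ) : ℝ) := by
      push_cast; unfold Int.fract; ring
    rw [this, nz_add_int]
  rw [key]
  set u := Int.fract a with hu
  set v := Int.fract b with hv
  have hu0 : 0 ≤ u := Int.fract_nonneg a
  have hu1 : u < 1 := Int.fract_lt_one a
  have hv0 : 0 ≤ v := Int.fract_nonneg b
  have hv1 : v < 1 := Int.fract_lt_one b
  unfold ArcDist nz
  rcases le_or_gt v u with hle | hlt
  · have h1 : |u - v| = u - v := abs_of_nonneg (by linarith)
    have hr : Int.fract (u - v) = u - v := Int.fract_eq_self.2 ⟨by linarith, by linarith⟩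
    rw [abs_sub_round_eq_min, hr, h1]
  · have h1 : |u - v| = v - u := by rw [abs_of_neg (by linarith : u - v < 0), neg_sub]
    have hr : Int.fract (u - v) = u - v + 1 := by
      have : Int.fract (u - v + 1) = u - v + 1 := Int.fract_eq_self.2 ⟨by linarith, by linarith⟩
      calc Int.fract (u - v) = Int.fract (u - v + (1:ℤ)) := (Int.fract_add_intCast _ _).symm
        _ = u - v + 1 := by push_cast at *; rw [this]
    rw [abs_sub_round_eq_min, hr, h1]
    rw [min_comm]
    ring_nf



lemma fract_of_neg {z : ℝ} (h1 : -1 ≤ z) (h2 : z < 0) : Int.fract z = z + 1 := by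
  have : Int.fract (z + (1:ℤ)) = z + 1 := by
    push_cast
    exact Int.fract_eq_self.2 ⟨by linarith, by linarith⟩
  rw [← this, Int.fract_add_intCast]

lemma cycR_lift {a b c : ℝ} (h1 : a < b) (h2 : b < c) (h3 : c < a + 1) :
    CycR (Int.fract a) (Int.fract b) (Int.fract c) := by
  have hab : ⌊a⌋ ≤ ⌊b⌋ := Int.floor_le_floor h1.le
  have hbc : ⌊b⌋ ≤ ⌊c⌋ := Int.floor_le_floor h2.le
  have hca : ⌊c⌋ ≤ ⌊a⌋ + 1 := by
    calc ⌊c⌋ ≤ ⌊a + 1⌋ := Int.floor_le_floor h3.le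
      _ = ⌊a⌋ + 1 := by rw [← Int.floor_add_intCast a 1]; norm_num
  have ea : Int.fract a = a - ⌊a⌋ := rfl
  have eb : Int.fract b = b - ⌊b⌋ := rfl
  have ec : Int.fract c = c - ⌊c⌋ := rfl
  have fa0 : (0:ℝ) ≤ Int.fract a := Int.fract_nonneg a
  have fa1 : Int.fract a < 1 := Int.fract_lt_one a
  have fb0 : (0:ℝ) ≤ Int.fract b := Int.fract_nonneg b
  have fb1 : Int.fract b < 1 := Int.fract_lt_one b
  have fc0 : (0:ℝ) ≤ Int.fract c := Int.fract_nonneg c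
  have fc1 : Int.fract c < 1 := Int.fract_lt_one c
  unfold CycR
  rcases eq_or_lt_of_le hab with hb | hb
  · rcases eq_or_lt_of_le hbc with hc | hc
    · -- same floor : fa < fb < fc
      left
      constructor
      · rw [ea, eb, ← hb]; push_cast; linarith
      · rw [eb, ec, ← hc, ← hb]; push_cast; linarith
    · -- ⌊c⌋ = ⌊a⌋+1, ⌊b⌋ = ⌊a⌋ : fc < fa < fb
      have hc' : ⌊c⌋ = ⌊a⌋ + 1 := le_antisymm hca (by omega)
      right; right
      constructor
      · rw [ec, ea, hc']; push_cast; linarith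
      · rw [ea, eb, ← hb]; push_cast; linarith
  · -- ⌊b⌋ = ⌊c⌋ = ⌊a⌋+1 : fb < fc < fa
    have hb' : ⌊b⌋ = ⌊a⌋ + 1 := by omega
    have hc' : ⌊c⌋ = ⌊a⌋ + 1 := by omega
    right; left
    constructor
    · rw [eb, ec, hb', hc']; push_cast; linarith
    · rw [ec, ea, hc']; push_cast; linarith

lemma cycR_not_swap {a b c : ℝ} (h : CycR a b c) : ¬ CycR c b a := by
  unfold CycR at *
  rcases h with ⟨h1, h2⟩ | ⟨h1, h2⟩ | ⟨h1, h2⟩ <;>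
    rintro (⟨g1, g2⟩ | ⟨g1, g2⟩ | ⟨g1, g2⟩) <;> linarith

lemma cycR_trichot {a b c : Circ} (hab : a ≠ b) (hbc : b ≠ c) (hac : a ≠ c) :
    CycR a.1 b.1 c.1 ∨ CycR c.1 b.1 a.1 := by
  have h1 : a.1 ≠ b.1 := fun h => hab (Subtype.ext h)
  have h2 : b.1 ≠ c.1 := fun h => hbc (Subtype.ext h)
  have h3 : a.1 ≠ c.1 := fun h => hac (Subtype.ext h)
  unfold CycR
  rcases lt_trichotomy a.1 b.1 with g1 | g1 | g1 <;>
  rcases lt_trichotomy b.1 c.1 with g2 | g2 | g2 <;>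
  rcases lt_trichotomy a.1 c.1 with g3 | g3 | g3 <;>
    first
      | (exact absurd g1 h1) | (exact absurd g2 h2) | (exact absurd g3 h3)
      | (left; left; exact ⟨g1, g2⟩)
      | (left; right; left; exact ⟨g2, g3⟩)
      | (left; right; right; exact ⟨g3, g1⟩)
      | (right; left; exact ⟨g2.symm ▸ g1, g2⟩)
      | (right; left; constructor <;> linarith)
      | (right; right; left; constructor <;> linarith)
      | (right; right; right; constructor <;> linarith)
      | (left; left; constructor <;> linarith)
      | (left; right; left; constructor <;> linarith)
      | (left; right; right; constructor <;> linarith)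
      | linarith

/-- characterization: for circle points, `CycR t x s` iff `fract (x - t) < fract (s - t)`. -/
lemma cycR_iff_fract {t x s : Circ} (hxt : x.1 ≠ t.1) (hxs : x.1 ≠ s.1) (hts : t.1 ≠ s.1) :
    CycR t.1 x.1 s.1 ↔ Int.fract (x.1 - t.1) < Int.fract (s.1 - t.1) := by
  have ht0 := t.2.1; have ht1 := t.2.2
  have hx0 := x.2.1; have hx1 := x.2.2
  have hs0 := s.2.1; have hs1 := s.2.2
  have exk : ∀ a b : ℝ, 0 ≤ a → a < 1 → 0 ≤ b → b < 1 → a < b →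
      Int.fract (a - b) = a - b + 1 := fun a b c1 c2 c3 c4 c5 =>
    fract_of_neg (by linarith) (by linarith)
  have exs : ∀ a b : ℝ, 0 ≤ a → a < 1 → 0 ≤ b → b < 1 → b ≤ a →
      Int.fract (a - b) = a - b := fun a b c1 c2 c3 c4 c5 =>
    Int.fract_eq_self.2 ⟨by linarith, by linarith⟩
  unfold CycR
  rcases lt_or_gt_of_ne hxt with h1 | h1 <;> rcases lt_or_gt_of_ne hts with h2 | h2
  · -- x < t, t < s
    rw [exk x.1 t.1 hx0 hx1 ht0 ht1 h1, exs s.1 t.1 hs0 hs1 ht0 ht1 h2.le]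
    constructor
    · rintro (⟨g1, g2⟩ | ⟨g1, g2⟩ | ⟨g1, g2⟩) <;> linarith
    · intro hlt; exfalso; linarith
  · -- x < t, s < t
    rw [exk x.1 t.1 hx0 hx1 ht0 ht1 h1, exk s.1 t.1 hs0 hs1 ht0 ht1 h2]
    constructor
    · rintro (⟨g1, g2⟩ | ⟨g1, g2⟩ | ⟨g1, g2⟩) <;> linarith
    · intro hlt
      rcases lt_or_gt_of_ne hxs with h3 | h3
      · exact Or.inr (Or.inl ⟨h3, h2⟩)
      · exfalso; linarith
  · -- t < x, t < s
    rw [exs x.1 t.1 hx0 hx1 ht0 ht1 h1.le, exs s.1 t.1 hs0 hs1 ht0 ht1 h2.le]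
    constructor
    · rintro (⟨g1, g2⟩ | ⟨g1, g2⟩ | ⟨g1, g2⟩) <;> linarith
    · intro hlt; exact Or.inl ⟨h1, by linarith⟩
  · -- t < x, s < t
    rw [exs x.1 t.1 hx0 hx1 ht0 ht1 h1.le, exk s.1 t.1 hs0 hs1 ht0 ht1 h2]
    constructor
    · intro _; linarith
    · intro _; exact Or.inr (Or.inr ⟨h2, h1⟩)

lemma fract_shift (a b : ℝ) : Int.fract (a - b) = Int.fract (Int.fract a - b) := by
  have : a - b = (Int.fract a - b) + (⌊a⌋ : ℤ) := by unfold Int.fract; push_cast; ring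
  rw [this, Int.fract_add_intCast]

lemma fract_sub_pos {a b : ℝ} (ha0 : 0 ≤ a) (ha1 : a < 1) (hb0 : 0 ≤ b) (hb1 : b < 1)
    (hne : a ≠ b) : 0 < Int.fract (a - b) := by
  rcases lt_or_eq_of_le (Int.fract_nonneg (a - b)) with h' | h'
  · exact h'
  · exfalso
    have h0 : Int.fract (a - b) = Int.fract (0:ℝ) := by rw [← h']; simp
    rcases Int.fract_eq_fract.1 h0 with ⟨k, hk⟩
    simp only [sub_zero] at hk
    have c1 : (-1:ℝ) < (k:ℝ) := by rw [← hk]; linarith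
    have c2 : (k:ℝ) < 1 := by rw [← hk]; linarith
    have c1' : (-1:ℤ) < k := by exact_mod_cast c1
    have c2' : k < 1 := by exact_mod_cast c2
    have : k = 0 := by omega
    rw [this] at hk
    simp at hk
    exact hne (by linarith)

/-- membership in the open arc is "open" in the lifted coordinates. -/
lemma cyc_open {t s p : Circ} (hpt : p.1 ≠ t.1) (hps : p.1 ≠ s.1) (hts : t.1 ≠ s.1)
    (h : CycR t.1 p.1 s.1) :
    ∃ δ > (0:ℝ), ∀ u : ℝ, |u - p.1| < δ → CycR t.1 (Int.fract u) s.1 := by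
  have hkey := (cycR_iff_fract hpt hps hts).1 h
  set fp := Int.fract (p.1 - t.1) with hfp
  set fs := Int.fract (s.1 - t.1) with hfs
  have hp0 : 0 < fp := fract_sub_pos p.2.1 p.2.2 t.2.1 t.2.2 hpt
  refine ⟨min fp (fs - fp), by simp [lt_min_iff]; exact ⟨hp0, hkey⟩, ?_⟩
  intro u hu
  have hu1 : -fp < u - p.1 := by
    have := (abs_lt.1 hu).1
    have h2 : min fp (fs - fp) ≤ fp := min_le_left _ _
    linarith
  have hu2 : u - p.1 < fs - fp := by
    have := (abs_lt.1 hu).2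
    have h2 : min fp (fs - fp) ≤ fs - fp := min_le_right _ _
    linarith
  have split : Int.fract (u - t.1) = fp + (u - p.1) := by
    have e0 : u - t.1 = (fp + (u - p.1)) + (⌊p.1 - t.1⌋ : ℤ) := by
      rw [hfp]; unfold Int.fract; push_cast; ring
    rw [e0, Int.fract_add_intCast]
    apply Int.fract_eq_self.2
    have hfs1 : fs < 1 := Int.fract_lt_one _
    constructor <;> [linarith; linarith]
  have hvx : Int.fract ((fractC u).1 - t.1) = fp + (u - p.1) := by
    rw [fractC]
    rw [← fract_shift u t.1]
    exact split
  have hxt : (fractC u).1 ≠ t.1 := by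
    intro hc
    have : Int.fract ((fractC u).1 - t.1) = 0 := by rw [hc]; simp
    rw [hvx] at this; linarith
  have hxs : (fractC u).1 ≠ s.1 := by
    intro hc
    have : Int.fract ((fractC u).1 - t.1) = fs := by rw [hc]
    rw [hvx] at this; linarith
  have := (cycR_iff_fract (t := t) (x := fractC u) (s := s) hxt hxs hts).2
    (by rw [hvx]; linarith)
  exact this


-- (chunk1&2 assumed available; restate the few needed here for isolated compile)
/-- `π` is locally of the form `x ↦ ±x + c` near `p` (in lifted coordinates). -/
def GoodAt (π : Equiv.Perm Circ) (p : Circ) : Prop :=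
  ∃ δ > (0:ℝ), ∃ ε c : ℝ, (ε = 1 ∨ ε = -1) ∧
    ∀ t : ℝ, |t - p.1| < δ → π (fractC t) = fractC (ε * t + c)

lemma eps_sq {ε : ℝ} (h : ε = 1 ∨ ε = -1) : ε * ε = 1 := by rcases h with h | h <;> rw [h] <;> norm_num

lemma eps_abs {ε : ℝ} (h : ε = 1 ∨ ε = -1) : |ε| = 1 := by rcases h with h | h <;> rw [h] <;> norm_num

lemma goodAt_comp {π ρ : Equiv.Perm Circ} {p : Circ}
    (h1 : GoodAt ρ p) (h2 : GoodAt π (ρ p)) : GoodAt (π * ρ) p := by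
  obtain ⟨δ1, hδ1, ε1, c1, hε1, f1⟩ := h1
  obtain ⟨δ2, hδ2, ε2, c2, hε2, f2⟩ := h2
  have hρp : ρ p = fractC (ε1 * p.1 + c1) := by
    have := f1 p.1 (by simp [hδ1])
    rwa [fractC_self] at this
  set k : ℤ := ⌊ε1 * p.1 + c1⌋ with hk
  have hval : (ρ p).1 = ε1 * p.1 + c1 - k := by
    rw [hρp, fractC_val]; rfl
  refine ⟨min δ1 δ2, lt_min hδ1 hδ2, ε2 * ε1, ε2 * (c1 - k) + c2, ?_, ?_⟩
  · rcases hε1 with h | h <;> rcases hε2 with h' | h' <;> rw [h, h'] <;> norm_num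
  intro t ht
  have ht1 : |t - p.1| < δ1 := lt_of_lt_of_le ht (min_le_left _ _)
  have ht2 : |t - p.1| < δ2 := lt_of_lt_of_le ht (min_le_right _ _)
  set s := ε1 * t + c1 - k with hs
  have hsd : |s - (ρ p).1| < δ2 := by
    have : s - (ρ p).1 = ε1 * (t - p.1) := by rw [hval, hs]; ring
    rw [this, abs_mul, eps_abs hε1, one_mul]; exact ht2
  calc (π * ρ) (fractC t) = π (ρ (fractC t)) := rfl
    _ = π (fractC (ε1 * t + c1)) := by rw [f1 t ht1]
    _ = π (fractC s) := by
        rw [show fractC (ε1 * t + c1) = fractC s from fractC_eq_of_sub_int k (by rw [hs]; ring)]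
    _ = fractC (ε2 * s + c2) := f2 s hsd
    _ = fractC (ε2 * ε1 * t + (ε2 * (c1 - k) + c2)) := by rw [hs]; ring_nf

lemma goodAt_one (p : Circ) : GoodAt 1 p := by
  refine ⟨1, one_pos, 1, 0, Or.inl rfl, fun t _ => ?_⟩
  have : (1 : Equiv.Perm Circ) (fractC t) = fractC t := rfl
  rw [this]
  norm_num

lemma goodAt_inv {π : Equiv.Perm Circ} {p : Circ} (h : GoodAt π p) : GoodAt π⁻¹ (π p) := by
  obtain ⟨δ, hδ, ε, c, hε, f⟩ := h
  have hsq := eps_sq hε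
  set k : ℤ := ⌊ε * p.1 + c⌋ with hk
  have hπp : π p = fractC (ε * p.1 + c) := by
    have := f p.1 (by simp [hδ])
    rwa [fractC_self] at this
  have hval : (π p).1 = ε * p.1 + c - k := by rw [hπp, fractC_val]; rfl
  refine ⟨δ, hδ, ε, ε * k - ε * c, hε, ?_⟩
  intro s hs
  set t := ε * s + (ε * k - ε * c) with htdef
  have ht : |t - p.1| < δ := by
    have e : t - p.1 = ε * (s - (π p).1) := by
      rw [hval, htdef]
      have : ε * (s - (ε * p.1 + c - ↑k)) = ε * s - (ε*ε) * p.1 - ε * c + ε * k := by ring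
      rw [this, hsq]; ring
    rw [e, abs_mul, eps_abs hε, one_mul]; exact hs
  have happ : π (fractC t) = fractC s := by
    rw [f t ht]
    apply fractC_eq_of_sub_int k
    have e : ε * t + c - s = (ε * ε) * (s + k - c) + c - s := by rw [htdef]; ring
    rw [hsq] at e; linarith
  rw [← happ]; exact π.symm_apply_apply _

noncomputable def Hgrp : Subgroup (Equiv.Perm Circ) where
  carrier := {π | {p : Circ | ¬ GoodAt π p}.Finite}
  one_mem' := by
    have : {p : Circ | ¬ GoodAt 1 p} = ∅ := by
      ext p; simp [goodAt_one p]
    simp only [Set.mem_setOf_eq, this]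
    exact finite_empty
  mul_mem' := by
    intro a b ha hb
    simp only [Set.mem_setOf_eq] at *
    apply Set.Finite.subset (hb.union (ha.preimage ((Equiv.injective b).injOn)))
    intro p hp
    simp only [Set.mem_setOf_eq, Set.mem_union, Set.mem_preimage] at *
    by_contra hcon
    push_neg at hcon
    exact hp (goodAt_comp hcon.1 hcon.2)
  inv_mem' := by
    intro a ha
    simp only [Set.mem_setOf_eq] at *
    apply Set.Finite.subset (ha.image a)
    intro p hp
    simp only [Set.mem_setOf_eq, Set.mem_image] at *
    refine ⟨a⁻¹ p, ?_, a.apply_symm_apply p⟩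
    intro hgood
    have := goodAt_inv hgood
    rw [show a (a⁻¹ p) = p from a.apply_symm_apply p] at this
    exact hp this

lemma mem_Hgrp_iff {π : Equiv.Perm Circ} : π ∈ Hgrp ↔ {p : Circ | ¬ GoodAt π p}.Finite :=
  Iff.rfl

lemma shift_goodAt {π : Equiv.Perm Circ} {u : ℝ} (hfun : ⇑π = shiftFun u) (p : Circ) :
    GoodAt π p := by
  refine ⟨1, one_pos, 1, u, Or.inl rfl, fun t _ => ?_⟩
  have : π (fractC t) = fractC ((fractC t).1 + u) := by rw [hfun]; rfl
  rw [this, fractC_val]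
  apply fractC_eq_of_sub_int (-⌊t⌋)
  unfold Int.fract; push_cast; ring

lemma rev_goodAt {π : Equiv.Perm Circ} (hfun : ⇑π = revFun) (p : Circ) :
    GoodAt π p := by
  refine ⟨1, one_pos, -1, 0, Or.inr rfl, fun t _ => ?_⟩
  have : π (fractC t) = fractC (-(fractC t).1) := by rw [hfun]; rfl
  rw [this, fractC_val]
  apply fractC_eq_of_sub_int ⌊t⌋
  unfold Int.fract; push_cast; ring

lemma arcRev_goodAt {π : Equiv.Perm Circ} {t s : Circ} (hts : t ≠ s)
    (hfun : ⇑π = arcRevFun t s) (p : Circ) (hpt : p ≠ t) (hps : p ≠ s) :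
    GoodAt π p := by
  have hvts : t.1 ≠ s.1 := fun h => hts (Subtype.ext h)
  have hvpt : p.1 ≠ t.1 := fun h => hpt (Subtype.ext h)
  have hvps : p.1 ≠ s.1 := fun h => hps (Subtype.ext h)
  rcases cycR_trichot hpt.symm hps hts with h | h
  · obtain ⟨δ, hδ, hop⟩ := cyc_open hvpt hvps hvts h
    refine ⟨δ, hδ, -1, t.1 + s.1, Or.inr rfl, fun u hu => ?_⟩
    have hcy : CycR t.1 (fractC u).1 s.1 := hop u hu
    have : π (fractC u) = fractC (t.1 + s.1 - (fractC u).1) := by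
      rw [hfun]; unfold arcRevFun; rw [if_pos hcy]
    rw [this, fractC_val]
    apply fractC_eq_of_sub_int ⌊u⌋
    unfold Int.fract; push_cast; ring
  · obtain ⟨δ, hδ, hop⟩ := cyc_open hvps hvpt hvts.symm h
    refine ⟨δ, hδ, 1, 0, Or.inl rfl, fun u hu => ?_⟩
    have hnc : ¬ CycR t.1 (fractC u).1 s.1 := cycR_not_swap (hop u hu)
    have : π (fractC u) = fractC u := by
      rw [hfun]; unfold arcRevFun; rw [if_neg hnc]
    rw [this]
    apply fractC_eq_of_sub_int 0
    push_cast; ring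

lemma dih_le_Hgrp : DihInf ≤ Hgrp := by
  rw [DihInf, Subgroup.closure_le]
  rintro π (⟨u, _, hfun⟩ | hfun) <;>
  · show π ∈ Hgrp
    rw [mem_Hgrp_iff]
    have : {p : Circ | ¬ GoodAt π p} = ∅ := by
      ext p
      simp only [Set.mem_setOf_eq, Set.mem_empty_iff_false, iff_false, not_not]
      first
        | exact shift_goodAt hfun p
        | exact rev_goodAt hfun p
    rw [this]; exact finite_empty

lemma gInf_le_Hgrp : GInf ≤ Hgrp := by
  rw [GInf, Subgroup.closure_le]
  rintro π ⟨t, s, hts, hfun⟩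
  show π ∈ Hgrp
  rw [mem_Hgrp_iff]
  apply Set.Finite.subset (Set.toFinite {t, s})
  intro p hp
  simp only [Set.mem_setOf_eq] at hp
  by_contra hcon
  simp only [Set.mem_insert_iff, Set.mem_singleton_iff] at hcon
  push_neg at hcon
  exact hp (arcRev_goodAt hts hfun p hcon.1 hcon.2)


/-- germ of an affine description at a real (lifted) coordinate. -/
def GermAt (Φ : ℝ → Circ) (t₀ : ℝ) : Prop :=
  ∃ δ > (0:ℝ), ∃ ε c : ℝ, (ε = 1 ∨ ε = -1) ∧
    ∀ u : ℝ, |u - t₀| < δ → Φ u = fractC (ε * u + c)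

lemma germAt_of_goodAt {π : Equiv.Perm Circ} {u₀ : ℝ} (h : GoodAt π (fractC u₀)) :
    GermAt (fun u => π (fractC u)) u₀ := by
  obtain ⟨δ, hδ, ε, c, hε, f⟩ := h
  refine ⟨δ, hδ, ε, c - ε * ⌊u₀⌋, hε, fun u hu => ?_⟩
  have hdist : |(u - ⌊u₀⌋) - (fractC u₀).1| < δ := by
    rw [fractC_val]
    have : (u - ⌊u₀⌋) - Int.fract u₀ = u - u₀ := by unfold Int.fract; ring
    rw [this]; exact hu
  have := f (u - ⌊u₀⌋) hdist
  have e1 : fractC (u - ⌊u₀⌋) = fractC u := fractC_eq_of_sub_int (-⌊u₀⌋) (by push_cast; ring)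
  rw [e1] at this
  show π (fractC u) = _
  rw [this]
  apply fractC_eq_of_sub_int 0
  push_cast; ring

lemma goodAt_of_germAt {π : Equiv.Perm Circ} {p : Circ}
    (h : GermAt (fun u => π (fractC u)) p.1) : GoodAt π p := by
  obtain ⟨δ, hδ, ε, c, hε, f⟩ := h
  exact ⟨δ, hδ, ε, c, hε, fun t ht => f t ht⟩

lemma germ_match {Φ : ℝ → Circ} {t₀ δ ε₁ c₁ ε₂ c₂ : ℝ} (hδ : 0 < δ)
    (hε₁ : ε₁ = 1 ∨ ε₁ = -1) (hε₂ : ε₂ = 1 ∨ ε₂ = -1)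
    (f1 : ∀ u : ℝ, |u - t₀| < δ → Φ u = fractC (ε₁ * u + c₁))
    (f2 : ∀ u : ℝ, |u - t₀| < δ → Φ u = fractC (ε₂ * u + c₂)) :
    ε₁ = ε₂ ∧ ∃ k : ℤ, c₁ - c₂ = k := by
  set m := min δ (1/2) with hm
  have hm0 : 0 < m := lt_min hδ (by norm_num)
  have hm2 : m ≤ 1/2 := min_le_right _ _
  have h1 : |t₀ - t₀| < δ := by simp [hδ]
  have h2 : |(t₀ + m/2) - t₀| < δ := by
    rw [show (t₀ + m/2) - t₀ = m/2 by ring, abs_of_pos (by linarith)]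
    calc m/2 < m := by linarith
      _ ≤ δ := min_le_left _ _
  have e1 : fractC (ε₁ * t₀ + c₁) = fractC (ε₂ * t₀ + c₂) := by
    rw [← f1 t₀ h1, f2 t₀ h1]
  have e2 : fractC (ε₁ * (t₀ + m/2) + c₁) = fractC (ε₂ * (t₀ + m/2) + c₂) := by
    rw [← f1 _ h2, f2 _ h2]
  obtain ⟨k1, hk1⟩ := fractC_eq_iff.1 e1
  obtain ⟨k2, hk2⟩ := fractC_eq_iff.1 e2
  by_cases he : ε₁ = ε₂
  · refine ⟨he, k1, ?_⟩
    rw [he] at hk1; linarith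
  · exfalso
    have hd : (ε₁ - ε₂) * (m/2) = (k2 : ℝ) - k1 := by linarith
    have habs : |ε₁ - ε₂| = 2 := by
      rcases hε₁ with h | h <;> rcases hε₂ with h' | h'
      · exact absurd (h.trans h'.symm) he
      · rw [h, h']; norm_num
      · rw [h, h']; norm_num
      · exact absurd (h.trans h'.symm) he
    have : |(k2 : ℝ) - k1| = m := by
      rw [← hd, abs_mul, habs, abs_of_pos (by linarith : (0:ℝ) < m/2)]; ring
    have hlt : |(k2 : ℝ) - k1| < 1 := by rw [this]; linarith
    have hpos : 0 < |(k2 : ℝ) - k1| := by rw [this]; exact hm0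
    have : ((k2 - k1 : ℤ) : ℝ) = 0 := by
      have h5 : |((k2 - k1 : ℤ) : ℝ)| < 1 := by push_cast; exact hlt
      have h6 : |k2 - k1| < 1 := by exact_mod_cast h5
      have h7 := abs_lt.1 h6
      have : k2 - k1 = 0 := by omega
      rw [this]; simp
    push_cast at this
    rw [show (k2:ℝ) - k1 = 0 from by linarith] at hpos
    simp at hpos

lemma consol {Φ : ℝ → Circ} {a b : ℝ} (hab : a < b)
    (H : ∀ t ∈ Ioo a b, GermAt Φ t) :
    ∃ ε c : ℝ, (ε = 1 ∨ ε = -1) ∧ ∀ t ∈ Ioo a b, Φ t = fractC (ε * t + c) := by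
  have ht₀ : (a+b)/2 ∈ Ioo a b := ⟨by linarith, by linarith⟩
  obtain ⟨δ₀, hδ₀, ε₀, c₀, hε₀, f₀⟩ := H _ ht₀
  set U : Set ℝ := {t | ∃ δ > (0:ℝ), ∀ u : ℝ, |u - t| < δ → Φ u = fractC (ε₀ * u + c₀)} with hUdef
  set V : Set ℝ := {t | ∃ δ > (0:ℝ), ∃ ε c : ℝ, (ε = 1 ∨ ε = -1) ∧
      (∀ u : ℝ, |u - t| < δ → Φ u = fractC (ε * u + c)) ∧
      ¬(ε = ε₀ ∧ ∃ k : ℤ, c - c₀ = k)} with hVdef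
  have hU : IsOpen U := by
    rw [Metric.isOpen_iff]
    rintro t ⟨δ, hδ, f⟩
    refine ⟨δ/2, by linarith, fun t' ht' => ?_⟩
    rw [Metric.mem_ball, Real.dist_eq] at ht'
    exact ⟨δ/2, by linarith, fun u hu => f u (by
      have := abs_sub_abs_le_abs_sub (u - t) (u - t')
      calc |u - t| = |(u - t') + (t' - t)| := by ring_nf
        _ ≤ |u - t'| + |t' - t| := abs_add_le _ _
        _ < δ := by linarith)⟩
  have hV : IsOpen V := by
    rw [Metric.isOpen_iff]
    rintro t ⟨δ, hδ, ε, c, hε, f, hne⟩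
    refine ⟨δ/2, by linarith, fun t' ht' => ?_⟩
    rw [Metric.mem_ball, Real.dist_eq] at ht'
    exact ⟨δ/2, by linarith, ε, c, hε, fun u hu => f u (by
      calc |u - t| = |(u - t') + (t' - t)| := by ring_nf
        _ ≤ |u - t'| + |t' - t| := abs_add_le _ _
        _ < δ := by linarith), hne⟩
  have hdisj : ∀ t, t ∈ U → t ∈ V → False := by
    rintro t ⟨δ1, hδ1, f1⟩ ⟨δ2, hδ2, ε, c, hε, f2, hne⟩
    have key := germ_match (t₀ := t) (lt_min hδ2 hδ1) hε hε₀
      (fun u hu => f2 u (lt_of_lt_of_le hu (min_le_left _ _)))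
      (fun u hu => f1 u (lt_of_lt_of_le hu (min_le_right _ _)))
    obtain ⟨he, k, hk⟩ := key
    exact hne ⟨he, k, hk⟩
  have hcover : Ioo a b ⊆ U ∪ V := by
    intro t ht
    obtain ⟨δ, hδ, ε, c, hε, f⟩ := H t ht
    by_cases hcls : ε = ε₀ ∧ ∃ k : ℤ, c - c₀ = k
    · left
      obtain ⟨he, k, hk⟩ := hcls
      refine ⟨δ, hδ, fun u hu => ?_⟩
      rw [f u hu, he]
      exact fractC_eq_of_sub_int k (by linarith)
    · exact Or.inr ⟨δ, hδ, ε, c, hε, f, hcls⟩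
  have hUne : (Ioo a b ∩ U).Nonempty := ⟨(a+b)/2, ht₀, ⟨δ₀, hδ₀, f₀⟩⟩
  have hVempty : Ioo a b ∩ V = ∅ := by
    by_contra hne
    rw [← Ne, ← nonempty_iff_ne_empty] at hne
    obtain ⟨y, hy1, hy2, hy3⟩ := isPreconnected_Ioo (a := a) (b := b) U V hU hV hcover hUne hne
    exact hdisj y hy2 hy3
  refine ⟨ε₀, c₀, hε₀, fun t ht => ?_⟩
  have htU : t ∈ U := by
    rcases hcover ht with h | h
    · exact h
    · exfalso; exact absurd (Set.mem_inter ht h) (by rw [hVempty]; simp)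
  obtain ⟨δ, hδ, f⟩ := htU
  exact f t (by simp [hδ])

/-- punctured good window around any point, when only finitely many bad points. -/
lemma window {π : Equiv.Perm Circ} (hfin : {p : Circ | ¬ GoodAt π p}.Finite) (p : Circ) :
    ∃ δ > (0:ℝ), δ < 1/4 ∧ ∀ u : ℝ, 0 < |u - p.1| → |u - p.1| < δ → GoodAt π (fractC u) := by
  classical
  set B := {p : Circ | ¬ GoodAt π p} with hB
  set S : Set ℝ := ((fun q : Circ => q.1) '' B) ∪ ((fun q : Circ => q.1 + 1) '' B) ∪
      ((fun q : Circ => q.1 - 1) '' B) with hS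
  have hSfin : S.Finite := Set.Finite.union (Set.Finite.union (hfin.image _) (hfin.image _)) (hfin.image _)
  have hS'fin : (S \ {p.1}).Finite := hSfin.diff
  set F : Finset ℝ := hS'fin.toFinset.image (fun v => |v - p.1|) with hF
  have hFpos : ∀ r ∈ F, 0 < r := by
    intro r hr
    rw [hF, Finset.mem_image] at hr
    obtain ⟨v, hv, rfl⟩ := hr
    rw [Set.Finite.mem_toFinset] at hv
    have : v ≠ p.1 := hv.2
    exact abs_pos.2 (sub_ne_zero.2 this)
  by_cases hne : F.Nonempty
  · set δ := min (F.min' hne) (1/8) with hδdef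
    have hδpos : 0 < δ := lt_min (hFpos _ (F.min'_mem hne)) (by norm_num)
    refine ⟨δ, hδpos, lt_of_le_of_lt (min_le_right _ _) (by norm_num), ?_⟩
    intro u hu0 hu1
    by_contra hbad
    have hmem : fractC u ∈ B := hbad
    have hfloor : ⌊u⌋ = -1 ∨ ⌊u⌋ = 0 ∨ ⌊u⌋ = 1 := by
      have hb1 : (-1:ℝ) ≤ u := by
        have := abs_lt.1 hu1
        have hp0 := p.2.1
        have : -(1/8:ℝ) < u - p.1 := by
          have hle : δ ≤ 1/8 := min_le_right _ _
          linarith [this.1]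
        linarith
      have hb2 : u < 2 := by
        have := (abs_lt.1 hu1).2
        have hp1 := p.2.2
        have hle : δ ≤ 1/8 := min_le_right _ _
        linarith
      have l1 : (-1 : ℤ) ≤ ⌊u⌋ := Int.le_floor.2 (by exact_mod_cast hb1)
      have l2 : ⌊u⌋ < 2 := Int.floor_lt.2 (by exact_mod_cast hb2)
      omega
    have huS : u ∈ S := by
      have : u = (fractC u).1 + (⌊u⌋ : ℝ) := by rw [fractC_val]; unfold Int.fract; ring
      rcases hfloor with h | h | h
      · right
        refine ⟨fractC u, hmem, ?_⟩
        show (fractC u).1 - 1 = u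
        rw [h] at this; push_cast at this; linarith
      · left; left
        refine ⟨fractC u, hmem, ?_⟩
        show (fractC u).1 = u
        rw [h] at this; push_cast at this; linarith
      · left; right
        refine ⟨fractC u, hmem, ?_⟩
        show (fractC u).1 + 1 = u
        rw [h] at this; push_cast at this; linarith
    have huS' : u ∈ S \ {p.1} := ⟨huS, by simp; intro h; rw [h] at hu0; simp at hu0⟩
    have : |u - p.1| ∈ F := by
      rw [hF, Finset.mem_image]
      exact ⟨u, (Set.Finite.mem_toFinset _).2 huS', rfl⟩
    have := F.min'_le _ this
    have hle : δ ≤ F.min' hne := min_le_left _ _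
    linarith
  · refine ⟨1/8, by norm_num, by norm_num, ?_⟩
    intro u hu0 hu1
    by_contra hbad
    have hmem : fractC u ∈ B := hbad
    have hfloor : ⌊u⌋ = -1 ∨ ⌊u⌋ = 0 ∨ ⌊u⌋ = 1 := by
      have hb1 : (-1:ℝ) ≤ u := by
        have := (abs_lt.1 hu1).1
        have hp0 := p.2.1
        linarith
      have hb2 : u < 2 := by
        have := (abs_lt.1 hu1).2
        have hp1 := p.2.2
        linarith
      have l1 : (-1 : ℤ) ≤ ⌊u⌋ := Int.le_floor.2 (by exact_mod_cast hb1)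
      have l2 : ⌊u⌋ < 2 := Int.floor_lt.2 (by exact_mod_cast hb2)
      omega
    have huS : u ∈ S := by
      have : u = (fractC u).1 + (⌊u⌋ : ℝ) := by rw [fractC_val]; unfold Int.fract; ring
      rcases hfloor with h | h | h
      · right
        refine ⟨fractC u, hmem, ?_⟩
        show (fractC u).1 - 1 = u
        rw [h] at this; push_cast at this; linarith
      · left; left
        refine ⟨fractC u, hmem, ?_⟩
        show (fractC u).1 = u
        rw [h] at this; push_cast at this; linarith
      · left; right
        refine ⟨fractC u, hmem, ?_⟩
        show (fractC u).1 + 1 = u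
        rw [h] at this; push_cast at this; linarith
    have huS' : u ∈ S \ {p.1} := ⟨huS, by simp; intro h; rw [h] at hu0; simp at hu0⟩
    have : |u - p.1| ∈ F := by
      rw [hF, Finset.mem_image]
      exact ⟨u, (Set.Finite.mem_toFinset _).2 huS', rfl⟩
    exact hne ⟨_, this⟩


lemma fractC_val' (x : ℝ) : (fractC x).1 = Int.fract x := rfl

lemma fract_ne_val {a b : ℝ} (h1 : a < b) (h2 : b < a + 1) : Int.fract a ≠ Int.fract b :=
  fun h => fractC_ne h1 h2 (Subtype.ext h)

lemma circ_ne_of_val {a b : Circ} (h : a.1 ≠ b.1) : a ≠ b :=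
  fun hh => h (congrArg Subtype.val hh)

/-- positivity of a strict circular Robinson dissimilarity off the diagonal. -/
lemma dpos {d : Circ → Circ → ℝ} (hd : DissimC d) (hR : StrictCircRobinsonC d)
    {u v : Circ} (huv : u ≠ v) : 0 < d u v := by
  have hval : u.1 ≠ v.1 := fun h => huv (Subtype.ext h)
  set β := Int.fract (v.1 - u.1) with hβ
  have hβ0 : 0 < β := fract_sub_pos v.2.1 v.2.2 u.2.1 u.2.2 (Ne.symm hval)
  have hβ1 : β < 1 := Int.fract_lt_one _
  set x := fractC (u.1 + β/2) with hx
  set z := fractC (u.1 + (1+β)/2) with hz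
  have hub : fractC (u.1 + β) = v := by
    have : fractC (u.1 + β) = fractC v.1 := by
      apply fractC_eq_of_sub_int (-⌊v.1 - u.1⌋)
      rw [hβ]; unfold Int.fract; push_cast; ring
    rw [this, fractC_self]
  have hu' : fractC u.1 = u := fractC_self u
  have hvub : Int.fract (u.1 + β) = v.1 := by
    have := congrArg Subtype.val hub; rwa [fractC_val'] at this
  have hvu : Int.fract u.1 = u.1 := by
    have := congrArg Subtype.val hu'; rwa [fractC_val'] at this
  have cyc1 : CycR u.1 x.1 v.1 := by
    have := cycR_lift (a := u.1) (b := u.1 + β/2) (c := u.1 + β)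
      (by linarith) (by linarith) (by linarith)
    rwa [hvu, hvub] at this
  have cyc2 : CycR u.1 v.1 z.1 := by
    have := cycR_lift (a := u.1) (b := u.1 + β) (c := u.1 + (1+β)/2)
      (by linarith) (by linarith) (by linarith)
    rwa [hvu, hvub] at this
  have hux : u ≠ x := by
    rw [← hu', hx]; exact fractC_ne (by linarith) (by linarith)
  have huz : u ≠ z := by
    rw [← hu', hz]; exact fractC_ne (by linarith) (by linarith)
  have hxv : x ≠ v := by
    rw [← hub, hx]; exact fractC_ne (by linarith) (by linarith)
  have hxz : x ≠ z := by
    rw [hx, hz]; exact fractC_ne (by linarith) (by linarith)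
  have hvz : v ≠ z := by
    rw [← hub, hz]; exact fractC_ne (by linarith) (by linarith)
  have key := hR u x v z hux huv huz hxv hxz hvz cyc1 cyc2
  have n1 : 0 ≤ d v x := (hd.1 v x).1
  have n2 : 0 ≤ d v z := (hd.1 v z).1
  have : 0 < d v u := lt_of_le_of_lt (le_min n1 n2) key
  rw [(hd.1 u v).2]; exact this

/-- the key Robinson inequality for a point `V = π w` whose preimage avoids
the closed window of radius `h` around `p`. -/
lemma robin_window {d : Circ → Circ → ℝ} {π : Equiv.Perm Circ}
    (hRob : StrictCircRobinsonC fun x y => d (π x) (π y))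
    (p : Circ) (h : ℝ) (hh0 : 0 < h) (hh : h < 1/4) (V : Circ)
    (hVwin : ∀ t : ℝ, |t - p.1| ≤ h → π (fractC t) ≠ V) :
    min (d (π p) (π (fractC (p.1 - h)))) (d (π p) (π (fractC (p.1 + h)))) < d (π p) V := by
  set w : Circ := π⁻¹ V with hw
  have hπw : π w = V := π.apply_symm_apply V
  set tw : ℝ := if p.1 < w.1 then w.1 else w.1 + 1 with htw
  have hfw : fractC tw = w := by
    rw [htw]
    by_cases hcase : p.1 < w.1
    · rw [if_pos hcase]; exact fractC_self w
    · rw [if_neg hcase]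
      have : fractC (w.1 + (1:ℤ)) = fractC w.1 := by
        apply fractC_eq_of_sub_int 1; push_cast; ring
      push_cast at this
      rw [this]; exact fractC_self w
  have htw1 : p.1 < tw := by
    rw [htw]
    by_cases hcase : p.1 < w.1
    · rw [if_pos hcase]; exact hcase
    · rw [if_neg hcase]
      have := w.2.1; have := p.2.2; linarith
  have htw2 : tw ≤ p.1 + 1 := by
    rw [htw]
    by_cases hcase : p.1 < w.1
    · rw [if_pos hcase]; have := w.2.2; have := p.2.1; linarith
    · rw [if_neg hcase]; push_neg at hcase; linarith
  have htwl : p.1 + h < tw := by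
    by_contra hcon
    push_neg at hcon
    have : |tw - p.1| ≤ h := by rw [abs_of_pos (by linarith)]; linarith
    exact hVwin tw this (by rw [hfw, hπw])
  have htwr : tw < p.1 + 1 - h := by
    by_contra hcon
    push_neg at hcon
    have hfr : fractC (tw - 1) = w := by
      rw [← hfw]
      apply fractC_eq_of_sub_int (-1); push_cast; ring
    have : |(tw - 1) - p.1| ≤ h := by
      rw [abs_of_nonpos (by linarith)]; linarith
    exact hVwin (tw - 1) this (by rw [hfr, hπw])
  -- lifted representatives and their fract values
  have vx : Int.fract (p.1 + 1 - h) = (fractC (p.1 - h)).1 := by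
    rw [fractC_val']
    have : fractC (p.1 + 1 - h) = fractC (p.1 - h) := by
      apply fractC_eq_of_sub_int 1; push_cast; ring
    exact congrArg Subtype.val this
  have vy : Int.fract (p.1 + 1) = p.1 := by
    have e : fractC (p.1 + 1) = fractC p.1 := by
      apply fractC_eq_of_sub_int 1; push_cast; ring
    have := congrArg Subtype.val (e.trans (fractC_self p))
    rwa [fractC_val'] at this
  have vz : Int.fract (p.1 + 1 + h) = (fractC (p.1 + h)).1 := by
    rw [fractC_val']
    have : fractC (p.1 + 1 + h) = fractC (p.1 + h) := by
      apply fractC_eq_of_sub_int 1; push_cast; ring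
    exact congrArg Subtype.val this
  have vw : Int.fract tw = w.1 := by
    have := congrArg Subtype.val hfw; rwa [fractC_val'] at this
  set x : Circ := fractC (p.1 - h) with hx
  set z : Circ := fractC (p.1 + h) with hz
  -- cyclic order facts
  have cyc1 : CycR w.1 x.1 p.1 := by
    have := cycR_lift (a := tw) (b := p.1 + 1 - h) (c := p.1 + 1)
      htwr (by linarith) (by linarith)
    rwa [vw, vx, vy] at this
  have cyc2 : CycR w.1 p.1 z.1 := by
    have := cycR_lift (a := tw) (b := p.1 + 1) (c := p.1 + 1 + h)
      (by linarith) (by linarith) (by linarith)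
    rwa [vw, vy, vz] at this
  -- distinctness
  have hwx : w ≠ x := by
    rw [← hfw, hx]
    have e : fractC (p.1 - h) = fractC (p.1 + 1 - h) := by
      apply fractC_eq_of_sub_int (-1); push_cast; ring
    rw [e]
    exact fractC_ne htwr (by linarith)
  have hwy : w ≠ p := by
    have e := fractC_ne htw1 (by linarith : tw < p.1 + 1)
    rw [fractC_self p, hfw] at e
    exact e.symm
  have hwz : w ≠ z := by
    rw [← hfw, hz]
    have e : fractC (p.1 + h) = fractC (p.1 + 1 + h) := by
      apply fractC_eq_of_sub_int (-1); push_cast; ring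
    rw [e]
    exact fractC_ne (by linarith) (by linarith)
  have hxy : x ≠ p := by
    have e := fractC_ne (by linarith : p.1 - h < p.1) (by linarith : p.1 < p.1 - h + 1)
    rw [fractC_self p] at e
    exact e
  have hxz : x ≠ z := by
    rw [hx, hz]
    exact fractC_ne (by linarith) (by linarith)
  have hyz : p ≠ z := by
    have e := fractC_ne (by linarith : p.1 < p.1 + h) (by linarith : p.1 + h < p.1 + 1)
    rw [fractC_self p] at e
    exact e
  have key := hRob w x p z hwx hwy hwz hxy hxz hyz cyc1 cyc2
  simp only [hπw] at key
  exact key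



lemma nz_sub_int (x : ℝ) (k : ℤ) : nz (x - k) = nz x := by
  have : x - k = x + (-k : ℤ) := by push_cast; ring
  rw [this, nz_add_int]

lemma arc_self (a : ℝ) : ArcDist a a = 0 := by
  unfold ArcDist; simp

lemma arc_circ (a : Circ) (b : ℝ) : ArcDist a.1 (fractC b).1 = nz (a.1 - b) := by
  have e : Int.fract a.1 = a.1 := Int.fract_eq_self.2 ⟨a.2.1, a.2.2⟩
  have := arc_fract a.1 b
  rwa [e, ← fractC_val b] at this

lemma fractC_shift_ne {a e : ℝ} (h1 : 0 < |e|) (h2 : |e| < 1) : fractC (a + e) ≠ fractC a := by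
  intro hcon
  rcases fractC_eq_iff.1 hcon with ⟨k, hk⟩
  have he : e = (k : ℝ) := by linarith
  have : |(k:ℝ)| < 1 := by rw [← he]; exact h2
  have hk1 : |k| < 1 := by exact_mod_cast this
  have h7 := abs_lt.1 hk1
  have : k = 0 := by omega
  rw [this] at he; simp at he; rw [he] at h1; simp at h1

lemma nz_pos_of_circ_ne {a b : ℝ} (h : fractC a ≠ fractC b) : 0 < nz (a - b) := by
  apply nz_pos
  intro k hk
  exact h (fractC_eq_of_sub_int k hk)

lemma case_core {d : Circ → Circ → ℝ} {π : Equiv.Perm Circ}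
    (hd : DissimC d) (hc : ContinuousArcC d) (hR : StrictCircRobinsonC d)
    (hRob : StrictCircRobinsonC fun x y => d (π x) (π y))
    (p : Circ) (h : ℝ) (hh0 : 0 < h) (hh4 : h < 1/4)
    (hwinV : ∀ ρ : ℝ, 0 < ρ → ρ ≤ h/2 →
      ∃ V : Circ, ArcDist (π p).1 V.1 ≤ ρ ∧ ∀ t : ℝ, |t - p.1| ≤ h → π (fractC t) ≠ V) :
    False := by
  have hp0 := p.2.1; have hp1 := p.2.2
  have hxp : fractC (p.1 - h) ≠ p := by
    have e := fractC_ne (show p.1 - h < p.1 by linarith) (show p.1 < p.1 - h + 1 by linarith)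
    rw [fractC_self p] at e; exact e
  have hzp : fractC (p.1 + h) ≠ p := by
    have e := fractC_ne (show p.1 < p.1 + h by linarith) (show p.1 + h < p.1 + 1 by linarith)
    rw [fractC_self p] at e; exact e.symm
  have hXP : π p ≠ π (fractC (p.1 - h)) := fun hq => hxp (π.injective hq.symm)
  have hZP : π p ≠ π (fractC (p.1 + h)) := fun hq => hzp (π.injective hq.symm)
  have hm : 0 < min (d (π p) (π (fractC (p.1 - h)))) (d (π p) (π (fractC (p.1 + h)))) :=
    lt_min (dpos hd hR hXP) (dpos hd hR hZP)
  obtain ⟨δ₄, hδ₄, hcont⟩ := hc (π p) (π p) _ hm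
  have hρ0 : 0 < min δ₄ h / 2 := by have := lt_min hδ₄ hh0; linarith
  have hρh : min δ₄ h / 2 ≤ h/2 := by have := min_le_right δ₄ h; linarith
  have hρδ : min δ₄ h / 2 < δ₄ := by have := min_le_left δ₄ h; linarith
  obtain ⟨V, hVd, hVwin⟩ := hwinV (min δ₄ h / 2) hρ0 hρh
  have harc0 : ArcDist (π p).1 (π p).1 < δ₄ := by rw [arc_self]; exact hδ₄
  have harc : ArcDist (π p).1 V.1 < δ₄ := lt_of_le_of_lt hVd hρδ
  have hlt := hcont (π p) V harc0 harc
  rw [hd.2] at hlt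
  have hVlt := (abs_lt.1 hlt).2
  have hgt := robin_window hRob p h hh0 hh4 V hVwin
  linarith


lemma int_eq_zero_of_abs_lt_one {k : ℤ} (h : |(k:ℝ)| < 1) : k = 0 := by
  have hk1 : |k| < 1 := by exact_mod_cast h
  have h7 := abs_lt.1 hk1
  omega

lemma case1 {d : Circ → Circ → ℝ} {π : Equiv.Perm Circ} {ε₁ c₁ ε₂ c₂ : ℝ}
    (hd : DissimC d) (hc : ContinuousArcC d) (hR : StrictCircRobinsonC d)
    (hRob : StrictCircRobinsonC fun x y => d (π x) (π y))
    (p : Circ) (δ₁ : ℝ) (hδ₁ : 0 < δ₁) (hδ₁4 : δ₁ < 1/4)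
    (f₁ : ∀ t : ℝ, p.1 - δ₁ < t → t < p.1 → π (fractC t) = fractC (ε₁ * t + c₁))
    (f₂ : ∀ t : ℝ, p.1 < t → t < p.1 + δ₁ → π (fractC t) = fractC (ε₂ * t + c₂))
    (habs1 : |ε₁| = 1) (habs2 : |ε₂| = 1)
    (hr₁ : 0 < nz ((π p).1 - (ε₁ * p.1 + c₁)))
    (hr₂ : 0 < nz ((π p).1 - (ε₂ * p.1 + c₂))) : False := by
  set r₁ := nz ((π p).1 - (ε₁ * p.1 + c₁)) with hr₁def
  set r₂ := nz ((π p).1 - (ε₂ * p.1 + c₂)) with hr₂def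
  set h := min δ₁ (min r₁ r₂) / 4 with hhdef
  have hm1 : h ≤ δ₁ / 4 := by
    have := min_le_left δ₁ (min r₁ r₂); rw [hhdef]; linarith
  have hm2 : 4 * h ≤ r₁ := by
    have h1 := min_le_right δ₁ (min r₁ r₂)
    have h2 := min_le_left r₁ r₂
    rw [hhdef]; linarith
  have hm3 : 4 * h ≤ r₂ := by
    have h1 := min_le_right δ₁ (min r₁ r₂)
    have h2 := min_le_right r₁ r₂
    rw [hhdef]; linarith
  have hh0 : 0 < h := by
    have := lt_min hδ₁ (lt_min hr₁ hr₂); rw [hhdef]; linarith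
  have hh4 : h < 1/4 := by linarith
  apply case_core hd hc hR hRob p h hh0 hh4
  intro ρ hρ0 hρh
  refine ⟨fractC ((π p).1 + ρ), ?_, ?_⟩
  · rw [arc_circ]
    have e : (π p).1 - ((π p).1 + ρ) = -ρ := by ring
    rw [e, nz_neg, nz_eq_abs (by rw [abs_of_pos hρ0]; linarith), abs_of_pos hρ0]
  · intro t hth heq
    rcases lt_trichotomy t p.1 with hcmp | hcmp | hcmp
    · have hlo : p.1 - δ₁ < t := by
        have := (abs_le.1 hth).1; linarith
      rw [f₁ t hlo hcmp] at heq
      rcases fractC_eq_iff.1 heq with ⟨k, hk⟩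
      have key : (π p).1 - (ε₁ * p.1 + c₁) = (ε₁ * (t - p.1) - ρ) + ((-k : ℤ) : ℝ) := by
        push_cast; linear_combination (-1 : ℝ) * hk
      have hb : r₁ ≤ |t - p.1| + ρ := by
        rw [hr₁def, key, nz_add_int]
        calc nz (ε₁ * (t - p.1) - ρ) = nz (ε₁ * (t - p.1) + (-ρ)) := by ring_nf
          _ ≤ nz (ε₁ * (t - p.1)) + nz (-ρ) := nz_add_le _ _
          _ ≤ |ε₁ * (t - p.1)| + |(-ρ)| := add_le_add (nz_le_abs _) (nz_le_abs _)
          _ = |t - p.1| + ρ := by rw [abs_mul, habs1, one_mul, abs_neg, abs_of_pos hρ0]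
      linarith
    · rw [hcmp, fractC_self] at heq
      have hne := fractC_shift_ne (a := (π p).1) (e := ρ)
        (by rw [abs_of_pos hρ0]; exact hρ0) (by rw [abs_of_pos hρ0]; linarith)
      rw [fractC_self] at hne
      exact hne heq.symm
    · have hhi : t < p.1 + δ₁ := by
        have := (abs_le.1 hth).2; linarith
      rw [f₂ t hcmp hhi] at heq
      rcases fractC_eq_iff.1 heq with ⟨k, hk⟩
      have key : (π p).1 - (ε₂ * p.1 + c₂) = (ε₂ * (t - p.1) - ρ) + ((-k : ℤ) : ℝ) := by
        push_cast; linear_combination (-1 : ℝ) * hk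
      have hb : r₂ ≤ |t - p.1| + ρ := by
        rw [hr₂def, key, nz_add_int]
        calc nz (ε₂ * (t - p.1) - ρ) = nz (ε₂ * (t - p.1) + (-ρ)) := by ring_nf
          _ ≤ nz (ε₂ * (t - p.1)) + nz (-ρ) := nz_add_le _ _
          _ ≤ |ε₂ * (t - p.1)| + |(-ρ)| := add_le_add (nz_le_abs _) (nz_le_abs _)
          _ = |t - p.1| + ρ := by rw [abs_mul, habs2, one_mul, abs_neg, abs_of_pos hρ0]
      linarith

lemma case2 {d : Circ → Circ → ℝ} {π : Equiv.Perm Circ} {ε₁ c₁ ε₂ c₂ : ℝ}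
    (hd : DissimC d) (hc : ContinuousArcC d) (hR : StrictCircRobinsonC d)
    (hRob : StrictCircRobinsonC fun x y => d (π x) (π y))
    (p : Circ) (δ₁ : ℝ) (hδ₁ : 0 < δ₁) (hδ₁4 : δ₁ < 1/4)
    (f₁ : ∀ t : ℝ, p.1 - δ₁ < t → t < p.1 → π (fractC t) = fractC (ε₁ * t + c₁))
    (f₂ : ∀ t : ℝ, p.1 < t → t < p.1 + δ₁ → π (fractC t) = fractC (ε₂ * t + c₂))
    (hε₁ : ε₁ = 1 ∨ ε₁ = -1) (hε₂ : ε₂ = 1 ∨ ε₂ = -1)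
    (hAB : fractC (ε₁ * p.1 + c₁) ≠ fractC (ε₂ * p.1 + c₂))
    (hPA : π p = fractC (ε₁ * p.1 + c₁)) : False := by
  have habs1 : |ε₁| = 1 := eps_abs hε₁
  have habs2 : |ε₂| = 1 := eps_abs hε₂
  set r₀ := nz ((ε₁ * p.1 + c₁) - (ε₂ * p.1 + c₂)) with hr₀def
  have hr₀ : 0 < r₀ := nz_pos_of_circ_ne hAB
  set h := min δ₁ r₀ / 4 with hhdef
  have hm1 : h ≤ δ₁ / 4 := by have := min_le_left δ₁ r₀; rw [hhdef]; linarith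
  have hm2 : 4 * h ≤ r₀ := by have := min_le_right δ₁ r₀; rw [hhdef]; linarith
  have hh0 : 0 < h := by have := lt_min hδ₁ hr₀; rw [hhdef]; linarith
  have hh4 : h < 1/4 := by linarith
  apply case_core hd hc hR hRob p h hh0 hh4
  intro ρ hρ0 hρh
  refine ⟨fractC ((ε₁ * p.1 + c₁) + ε₁ * ρ), ?_, ?_⟩
  · rw [hPA]
    refine le_of_eq ?_
    have e := arc_fract (ε₁ * p.1 + c₁) ((ε₁ * p.1 + c₁) + ε₁ * ρ)
    have e2 : (ε₁ * p.1 + c₁) - ((ε₁ * p.1 + c₁) + ε₁ * ρ) = -(ε₁ * ρ) := by ring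
    calc ArcDist (fractC (ε₁ * p.1 + c₁)).1 (fractC ((ε₁ * p.1 + c₁) + ε₁ * ρ)).1
        = nz ((ε₁ * p.1 + c₁) - ((ε₁ * p.1 + c₁) + ε₁ * ρ)) := e
      _ = ρ := by
          rw [e2, nz_neg, nz_eq_abs (by rw [abs_mul, habs1, one_mul, abs_of_pos hρ0]; linarith)]
          rw [abs_mul, habs1, one_mul, abs_of_pos hρ0]
  · intro t hth heq
    rcases lt_trichotomy t p.1 with hcmp | hcmp | hcmp
    · have hlo : p.1 - δ₁ < t := by have := (abs_le.1 hth).1; linarith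
      rw [f₁ t hlo hcmp] at heq
      rcases fractC_eq_iff.1 heq with ⟨k, hk⟩
      have key : ε₁ * ((t - p.1) - ρ) = (k : ℝ) := by linear_combination hk
      have habsk : |(k : ℝ)| < 1 := by
        rw [← key, abs_mul, habs1, one_mul]
        calc |t - p.1 - ρ| ≤ |t - p.1| + |ρ| := abs_sub _ _
          _ < 1 := by rw [abs_of_pos hρ0]; linarith
      have hk0 : k = 0 := int_eq_zero_of_abs_lt_one habsk
      rw [hk0] at key
      push_cast at key
      have hε1ne : ε₁ ≠ 0 := by intro hcon; rw [hcon] at habs1; simp at habs1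
      have : t - p.1 - ρ = 0 := by
        rcases mul_eq_zero.1 key with hcon | hcon
        · exact absurd hcon hε1ne
        · exact hcon
      linarith
    · rw [hcmp, fractC_self, hPA] at heq
      exact fractC_shift_ne (a := ε₁ * p.1 + c₁) (e := ε₁ * ρ)
        (by rw [abs_mul, habs1, one_mul, abs_of_pos hρ0]; exact hρ0)
        (by rw [abs_mul, habs1, one_mul, abs_of_pos hρ0]; linarith) heq.symm
    · have hhi : t < p.1 + δ₁ := by have := (abs_le.1 hth).2; linarith
      rw [f₂ t hcmp hhi] at heq
      rcases fractC_eq_iff.1 heq with ⟨k, hk⟩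
      have key : (ε₁ * p.1 + c₁) - (ε₂ * p.1 + c₂)
          = (ε₂ * (t - p.1) - ε₁ * ρ) + ((-k : ℤ) : ℝ) := by
        push_cast; linear_combination (-1 : ℝ) * hk
      have hb : r₀ ≤ |t - p.1| + ρ := by
        rw [hr₀def, key, nz_add_int]
        calc nz (ε₂ * (t - p.1) - ε₁ * ρ) = nz (ε₂ * (t - p.1) + (-(ε₁ * ρ))) := by ring_nf
          _ ≤ nz (ε₂ * (t - p.1)) + nz (-(ε₁ * ρ)) := nz_add_le _ _
          _ ≤ |ε₂ * (t - p.1)| + |(-(ε₁ * ρ))| := add_le_add (nz_le_abs _) (nz_le_abs _)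
          _ = |t - p.1| + ρ := by
              rw [abs_mul, habs2, one_mul, abs_neg, abs_mul, habs1, one_mul, abs_of_pos hρ0]
      linarith

lemma case2' {d : Circ → Circ → ℝ} {π : Equiv.Perm Circ} {ε₁ c₁ ε₂ c₂ : ℝ}
    (hd : DissimC d) (hc : ContinuousArcC d) (hR : StrictCircRobinsonC d)
    (hRob : StrictCircRobinsonC fun x y => d (π x) (π y))
    (p : Circ) (δ₁ : ℝ) (hδ₁ : 0 < δ₁) (hδ₁4 : δ₁ < 1/4)
    (f₁ : ∀ t : ℝ, p.1 - δ₁ < t → t < p.1 → π (fractC t) = fractC (ε₁ * t + c₁))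
    (f₂ : ∀ t : ℝ, p.1 < t → t < p.1 + δ₁ → π (fractC t) = fractC (ε₂ * t + c₂))
    (hε₁ : ε₁ = 1 ∨ ε₁ = -1) (hε₂ : ε₂ = 1 ∨ ε₂ = -1)
    (hAB : fractC (ε₁ * p.1 + c₁) ≠ fractC (ε₂ * p.1 + c₂))
    (hPB : π p = fractC (ε₂ * p.1 + c₂)) : False := by
  have habs1 : |ε₁| = 1 := eps_abs hε₁
  have habs2 : |ε₂| = 1 := eps_abs hε₂
  set r₀ := nz ((ε₁ * p.1 + c₁) - (ε₂ * p.1 + c₂)) with hr₀def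
  have hr₀ : 0 < r₀ := nz_pos_of_circ_ne hAB
  set h := min δ₁ r₀ / 4 with hhdef
  have hm1 : h ≤ δ₁ / 4 := by have := min_le_left δ₁ r₀; rw [hhdef]; linarith
  have hm2 : 4 * h ≤ r₀ := by have := min_le_right δ₁ r₀; rw [hhdef]; linarith
  have hh0 : 0 < h := by have := lt_min hδ₁ hr₀; rw [hhdef]; linarith
  have hh4 : h < 1/4 := by linarith
  apply case_core hd hc hR hRob p h hh0 hh4
  intro ρ hρ0 hρh
  refine ⟨fractC ((ε₂ * p.1 + c₂) - ε₂ * ρ), ?_, ?_⟩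
  · rw [hPB]
    refine le_of_eq ?_
    have e := arc_fract (ε₂ * p.1 + c₂) ((ε₂ * p.1 + c₂) - ε₂ * ρ)
    have e2 : (ε₂ * p.1 + c₂) - ((ε₂ * p.1 + c₂) - ε₂ * ρ) = ε₂ * ρ := by ring
    calc ArcDist (fractC (ε₂ * p.1 + c₂)).1 (fractC ((ε₂ * p.1 + c₂) - ε₂ * ρ)).1
        = nz ((ε₂ * p.1 + c₂) - ((ε₂ * p.1 + c₂) - ε₂ * ρ)) := e
      _ = ρ := by
          rw [e2, nz_eq_abs (by rw [abs_mul, habs2, one_mul, abs_of_pos hρ0]; linarith)]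
          rw [abs_mul, habs2, one_mul, abs_of_pos hρ0]
  · intro t hth heq
    rcases lt_trichotomy t p.1 with hcmp | hcmp | hcmp
    · have hlo : p.1 - δ₁ < t := by have := (abs_le.1 hth).1; linarith
      rw [f₁ t hlo hcmp] at heq
      rcases fractC_eq_iff.1 heq with ⟨k, hk⟩
      have key : (ε₁ * p.1 + c₁) - (ε₂ * p.1 + c₂)
          = (-(ε₁ * (t - p.1)) - ε₂ * ρ) + ((k : ℤ) : ℝ) := by
        push_cast; linear_combination hk
      have hb : r₀ ≤ |t - p.1| + ρ := by
        rw [hr₀def, key, nz_add_int]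
        calc nz (-(ε₁ * (t - p.1)) - ε₂ * ρ) = nz (-(ε₁ * (t - p.1)) + (-(ε₂ * ρ))) := by ring_nf
          _ ≤ nz (-(ε₁ * (t - p.1))) + nz (-(ε₂ * ρ)) := nz_add_le _ _
          _ ≤ |(-(ε₁ * (t - p.1)))| + |(-(ε₂ * ρ))| := add_le_add (nz_le_abs _) (nz_le_abs _)
          _ = |t - p.1| + ρ := by
              rw [abs_neg, abs_neg, abs_mul, habs1, one_mul, abs_mul, habs2, one_mul,
                abs_of_pos hρ0]
      linarith
    · rw [hcmp, fractC_self, hPB] at heq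
      have hne := fractC_shift_ne (a := ε₂ * p.1 + c₂) (e := -(ε₂ * ρ))
        (by rw [abs_neg, abs_mul, habs2, one_mul, abs_of_pos hρ0]; exact hρ0)
        (by rw [abs_neg, abs_mul, habs2, one_mul, abs_of_pos hρ0]; linarith)
      have e3 : (ε₂ * p.1 + c₂) + (-(ε₂ * ρ)) = (ε₂ * p.1 + c₂) - ε₂ * ρ := by ring
      rw [e3] at hne
      exact hne heq.symm
    · have hhi : t < p.1 + δ₁ := by have := (abs_le.1 hth).2; linarith
      rw [f₂ t hcmp hhi] at heq
      rcases fractC_eq_iff.1 heq with ⟨k, hk⟩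
      have key : ε₂ * ((t - p.1) + ρ) = (k : ℝ) := by linear_combination hk
      have habsk : |(k : ℝ)| < 1 := by
        rw [← key, abs_mul, habs2, one_mul]
        calc |t - p.1 + ρ| ≤ |t - p.1| + |ρ| := abs_add_le _ _
          _ < 1 := by rw [abs_of_pos hρ0]; linarith
      have hk0 : k = 0 := int_eq_zero_of_abs_lt_one habsk
      rw [hk0] at key
      push_cast at key
      have hε2ne : ε₂ ≠ 0 := by intro hcon; rw [hcon] at habs2; simp at habs2
      have : t - p.1 + ρ = 0 := by
        rcases mul_eq_zero.1 key with hcon | hcon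
        · exact absurd hcon hε2ne
        · exact hcon
      linarith

lemma main_good {d : Circ → Circ → ℝ} (hd : DissimC d) (hc : ContinuousArcC d)
    (hR : StrictCircRobinsonC d) {π : Equiv.Perm Circ}
    (hRob : StrictCircRobinsonC fun x y => d (π x) (π y))
    (hfin : {q : Circ | ¬ GoodAt π q}.Finite) (p : Circ) : GoodAt π p := by
  obtain ⟨δ₁, hδ₁, hδ₁4, hwin⟩ := window hfin p
  have hp0 := p.2.1; have hp1 := p.2.2
  have hleft : ∀ t ∈ Ioo (p.1 - δ₁) p.1, GermAt (fun u => π (fractC u)) t := by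
    intro t ht
    obtain ⟨ht1, ht2⟩ := ht
    apply germAt_of_goodAt
    apply hwin t
    · rw [abs_of_neg (by linarith : t - p.1 < 0)]; linarith
    · rw [abs_of_neg (by linarith : t - p.1 < 0)]; linarith
  have hright : ∀ t ∈ Ioo p.1 (p.1 + δ₁), GermAt (fun u => π (fractC u)) t := by
    intro t ht
    obtain ⟨ht1, ht2⟩ := ht
    apply germAt_of_goodAt
    apply hwin t
    · rw [abs_of_pos (by linarith : 0 < t - p.1)]; linarith
    · rw [abs_of_pos (by linarith : 0 < t - p.1)]; linarith
  obtain ⟨ε₁, c₁, hε₁, f₁0⟩ := consol (by linarith : p.1 - δ₁ < p.1) hleft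
  obtain ⟨ε₂, c₂, hε₂, f₂0⟩ := consol (by linarith : p.1 < p.1 + δ₁) hright
  have f₁ : ∀ t : ℝ, p.1 - δ₁ < t → t < p.1 → π (fractC t) = fractC (ε₁ * t + c₁) :=
    fun t h1 h2 => f₁0 t ⟨h1, h2⟩
  have f₂ : ∀ t : ℝ, p.1 < t → t < p.1 + δ₁ → π (fractC t) = fractC (ε₂ * t + c₂) :=
    fun t h1 h2 => f₂0 t ⟨h1, h2⟩
  have habs1 : |ε₁| = 1 := eps_abs hε₁
  have habs2 : |ε₂| = 1 := eps_abs hε₂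
  -- the two one-sided limits (lifted)
  by_cases hgood : ε₁ = ε₂ ∧ (∃ k : ℤ, c₁ - c₂ = k) ∧ π p = fractC (ε₁ * p.1 + c₁)
  · obtain ⟨he, ⟨k, hk⟩, hPfA⟩ := hgood
    refine ⟨δ₁, hδ₁, ε₁, c₁, hε₁, ?_⟩
    intro t ht
    rcases lt_trichotomy t p.1 with hcmp | hcmp | hcmp
    · exact f₁ t (by linarith [(abs_lt.1 ht).1]) hcmp
    · rw [hcmp, fractC_self]; exact hPfA
    · rw [f₂ t hcmp (by linarith [(abs_lt.1 ht).2])]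
      apply fractC_eq_of_sub_int (-k)
      have e : ε₂ * t + c₂ - (ε₁ * t + c₁) = -(c₁ - c₂) := by rw [he]; ring
      rw [e, hk]; push_cast; ring
  · exfalso
    -- window exclusion helpers will use these formulas
    by_cases hAB : fractC (ε₁ * p.1 + c₁) = fractC (ε₂ * p.1 + c₂)
    · by_cases he : ε₁ = ε₂
      · -- no slope change, no jump ⇒ must be P ≠ L⁻; Case 1
        have hk : ∃ k : ℤ, c₁ - c₂ = k := by
          rcases fractC_eq_iff.1 hAB with ⟨k, hkk⟩
          exact ⟨k, by rw [he] at hkk; linarith⟩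
        have hPA : π p ≠ fractC (ε₁ * p.1 + c₁) := fun hPA => hgood ⟨he, hk, hPA⟩
        have hPB : π p ≠ fractC (ε₂ * p.1 + c₂) := by rw [← hAB]; exact hPA
        -- Case 1
        have hr₁ : 0 < nz ((π p).1 - (ε₁ * p.1 + c₁)) := by
          apply nz_pos_of_circ_ne
          rw [fractC_self]; exact hPA
        have hr₂ : 0 < nz ((π p).1 - (ε₂ * p.1 + c₂)) := by
          apply nz_pos_of_circ_ne
          rw [fractC_self]; exact hPB
        exact case1 hd hc hR hRob p δ₁ hδ₁ hδ₁4 f₁ f₂ habs1 habs2 hr₁ hr₂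
      · -- slope change without jump: injectivity contradiction
        rcases fractC_eq_iff.1 hAB with ⟨k, hkk⟩
        have hε2v : ε₂ = -ε₁ := by
          rcases hε₁ with h1 | h1 <;> rcases hε₂ with h2 | h2
          · exact absurd (h1.trans h2.symm) he
          · norm_num [h1, h2]
          · norm_num [h1, h2]
          · exact absurd (h1.trans h2.symm) he
        have e1 : π (fractC (p.1 - δ₁/2)) = fractC (ε₁ * (p.1 - δ₁/2) + c₁) :=
          f₁ _ (by linarith) (by linarith)
        have e2 : π (fractC (p.1 + δ₁/2)) = fractC (ε₂ * (p.1 + δ₁/2) + c₂) :=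
          f₂ _ (by linarith) (by linarith)
        have e3 : fractC (ε₁ * (p.1 - δ₁/2) + c₁) = fractC (ε₂ * (p.1 + δ₁/2) + c₂) := by
          apply fractC_eq_of_sub_int k
          have : ε₁ * (p.1 - δ₁/2) + c₁ - (ε₂ * (p.1 + δ₁/2) + c₂)
              = (ε₁ * p.1 + c₁) - (ε₂ * p.1 + c₂) := by rw [hε2v]; ring
          rw [this]; exact hkk
        have : fractC (p.1 - δ₁/2) = fractC (p.1 + δ₁/2) :=
          π.injective (by rw [e1, e2, e3])
        exact fractC_ne (by linarith) (by linarith) this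
    · -- jump
      by_cases hPA : π p = fractC (ε₁ * p.1 + c₁)
      · exact case2 hd hc hR hRob p δ₁ hδ₁ hδ₁4 f₁ f₂ hε₁ hε₂ hAB hPA
      · by_cases hPB : π p = fractC (ε₂ * p.1 + c₂)
        · exact case2' hd hc hR hRob p δ₁ hδ₁ hδ₁4 f₁ f₂ hε₁ hε₂ hAB hPB
        · have hr₁ : 0 < nz ((π p).1 - (ε₁ * p.1 + c₁)) := by
            apply nz_pos_of_circ_ne; rw [fractC_self]; exact hPA
          have hr₂ : 0 < nz ((π p).1 - (ε₂ * p.1 + c₂)) := by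
            apply nz_pos_of_circ_ne; rw [fractC_self]; exact hPB
          exact case1 hd hc hR hRob p δ₁ hδ₁ hδ₁4 f₁ f₂ habs1 habs2 hr₁ hr₂


noncomputable def shiftPerm (u : ℝ) : Equiv.Perm Circ where
  toFun := shiftFun u
  invFun := fun x => fractC (x.1 - u)
  left_inv := by
    intro x
    show fractC ((fractC (x.1 + u)).1 - u) = x
    rw [fractC_val]
    have e : fractC (Int.fract (x.1 + u) - u) = fractC x.1 :=
      fractC_eq_of_sub_int (-⌊x.1 + u⌋) (by unfold Int.fract; push_cast; ring)
    rw [e, fractC_self]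
  right_inv := by
    intro x
    show fractC ((fractC (x.1 - u)).1 + u) = x
    rw [fractC_val]
    have e : fractC (Int.fract (x.1 - u) + u) = fractC x.1 :=
      fractC_eq_of_sub_int (-⌊x.1 - u⌋) (by unfold Int.fract; push_cast; ring)
    rw [e, fractC_self]

noncomputable def revPerm : Equiv.Perm Circ where
  toFun := revFun
  invFun := revFun
  left_inv := by
    intro x
    show fractC (-(fractC (-x.1)).1) = x
    rw [fractC_val]
    have e : fractC (-Int.fract (-x.1)) = fractC x.1 :=
      fractC_eq_of_sub_int ⌊-x.1⌋ (by unfold Int.fract; push_cast; ring)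
    rw [e, fractC_self]
  right_inv := by
    intro x
    show fractC (-(fractC (-x.1)).1) = x
    rw [fractC_val]
    have e : fractC (-Int.fract (-x.1)) = fractC x.1 :=
      fractC_eq_of_sub_int ⌊-x.1⌋ (by unfold Int.fract; push_cast; ring)
    rw [e, fractC_self]

lemma shiftPerm_mem (c : ℝ) : shiftPerm (Int.fract c) ∈ DihInf :=
  Subgroup.subset_closure
    (Set.mem_union_left _ ⟨Int.fract c, ⟨Int.fract_nonneg c, Int.fract_lt_one c⟩, rfl⟩)

lemma revPerm_mem : revPerm ∈ DihInf :=
  Subgroup.subset_closure (Set.mem_union_right _ rfl)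

lemma final_dih {π : Equiv.Perm Circ} {ε c : ℝ} (hε : ε = 1 ∨ ε = -1)
    (fx : ∀ x : Circ, π x = fractC (ε * x.1 + c)) : π ∈ DihInf := by
  rcases hε with hε | hε
  · have hπeq : π = shiftPerm (Int.fract c) := by
      apply Equiv.ext
      intro x
      rw [fx x, hε, one_mul]
      show fractC (x.1 + c) = fractC (x.1 + Int.fract c)
      exact fractC_eq_of_sub_int ⌊c⌋ (by unfold Int.fract; push_cast; ring)
    rw [hπeq]
    exact shiftPerm_mem c
  · have hπeq : π = shiftPerm (Int.fract c) * revPerm := by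
      apply Equiv.ext
      intro x
      rw [fx x, hε]
      rw [Equiv.Perm.mul_apply]
      show fractC (-1 * x.1 + c) = fractC ((fractC (-x.1)).1 + Int.fract c)
      rw [fractC_val]
      exact fractC_eq_of_sub_int (⌊-x.1⌋ + ⌊c⌋) (by unfold Int.fract; push_cast; ring)
    rw [hπeq]
    exact Subgroup.mul_mem _ (shiftPerm_mem c) revPerm_mem

end Aux17

open Aux17

/-- If `π = g ∘ h` with `g` in the infinite dihedral group and `h` in the group
generated by arc reversals, and `d ∘ π` is strict circular Robinson for a
continuous strict circular Robinson dissimilarity `d`, then `π` is in the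
infinite dihedral group. -/
theorem statement17 (d : Circ → Circ → ℝ) (hd : DissimC d)
    (hc : ContinuousArcC d) (hR : StrictCircRobinsonC d)
    (π g h : Equiv.Perm Circ) (hg : g ∈ DihInf) (hh : h ∈ GInf) (hπ : π = g * h)
    (hRob : StrictCircRobinsonC fun x y => d (π x) (π y)) :
    π ∈ DihInf := by
  have hπH : π ∈ Hgrp := by
    rw [hπ]
    exact Subgroup.mul_mem _ (dih_le_Hgrp hg) (gInf_le_Hgrp hh)
  have hfin : {q : Circ | ¬ GoodAt π q}.Finite := hπH
  have hgood : ∀ p : Circ, GoodAt π p := main_good hd hc hR hRob hfin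
  have hgerm : ∀ t ∈ Set.Ioo (-1:ℝ) 2, GermAt (fun u => π (fractC u)) t :=
    fun t _ => germAt_of_goodAt (hgood _)
  obtain ⟨ε, c, hε, f⟩ := consol (by norm_num : (-1:ℝ) < 2) hgerm
  have fx : ∀ x : Circ, π x = fractC (ε * x.1 + c) := by
    intro x
    have hmem : x.1 ∈ Set.Ioo (-1:ℝ) 2 := ⟨by linarith [x.2.1], by linarith [x.2.2]⟩
    have h2 : π (fractC x.1) = fractC (ε * x.1 + c) := f x.1 hmem
    rw [fractC_self] at h2
    exact h2
  exact final_dih hε fx
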